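/- Under assumption A1, suppose n ≥ 100 and τ = 1/(10√n). Let x ∈ F_p⁰ and μ > 0 satisfy δ(x, μ) ≤ 1/2, let z = (1/μ)X s(x,μ), and let x⁺ = X(2e − z + ψ_x) be the inexact primal IPM iterate with error vector ψ_x satisfying ‖ψ_x‖ ≤ 1/(40√(3n)). Then x⁺ ≥ 0.1·x componentwise (so x⁺ ∈ F_p⁰), and δ(x⁺, (1−τ)μ) ≤ 1/2. -/

import Mathlib

open Matrix

noncomputable def euclidNorm {ι : Type*} [Fintype ι] (v : ι → ℝ) : ℝ :=
  Real.sqrt (∑ i, (v i) ^ 2)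

noncomputable def opNorm {ι κ : Type*} [Fintype ι] [Fintype κ]
    (M : Matrix ι κ ℝ) : ℝ :=
  sSup {r : ℝ | ∃ v : κ → ℝ, euclidNorm v ≤ 1 ∧ r = euclidNorm (M *ᵥ v)}

noncomputable def lambdaMin {ι : Type*} [Fintype ι] (M : Matrix ι ι ℝ) : ℝ :=
  sInf {r : ℝ | ∃ v : ι → ℝ, euclidNorm v = 1 ∧ r = v ⬝ᵥ (M *ᵥ v)}

noncomputable def lambdaMax {ι : Type*} [Fintype ι] (M : Matrix ι ι ℝ) : ℝ :=
  sSup {r : ℝ | ∃ v : ι → ℝ, euclidNorm v = 1 ∧ r = v ⬝ᵥ (M *ᵥ v)}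

noncomputable def condNum {ι : Type*} [Fintype ι] (M : Matrix ι ι ℝ) : ℝ :=
  lambdaMax M / lambdaMin M

noncomputable def gradProj {m n : ℕ} (B : Matrix (Fin m) (Fin n) ℝ) :
    Matrix (Fin n) (Fin n) ℝ :=
  1 - Bᵀ * (B * Bᵀ)⁻¹ * B

/-- The proximity measure `δ(x, μ) = ‖P_{AX}((1/μ) X c - e)‖`. -/
noncomputable def prox {m n : ℕ} (A : Matrix (Fin m) (Fin n) ℝ)
    (c x : Fin n → ℝ) (μ : ℝ) : ℝ :=
  euclidNorm (gradProj (A * Matrix.diagonal x) *ᵥ (μ⁻¹ • (Matrix.diagonal x *ᵥ c) - 1))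

/-- The proximity measure as `min_{(y,s) ∈ F_d} ‖(1/μ) X s - e‖`. -/
noncomputable def proxMin {m n : ℕ} (A : Matrix (Fin m) (Fin n) ℝ)
    (c x : Fin n → ℝ) (μ : ℝ) : ℝ :=
  sInf {r : ℝ | ∃ (y : Fin m → ℝ) (s : Fin n → ℝ),
    Aᵀ *ᵥ y + s = c ∧ (∀ i, 0 ≤ s i) ∧
    r = euclidNorm (μ⁻¹ • (Matrix.diagonal x *ᵥ s) - 1)}

/-- The primal normal matrix `A X² Aᵀ` is positive semidefinite. -/
theorem normalPSD {m n : ℕ} (A : Matrix (Fin m) (Fin n) ℝ) (x : Fin n → ℝ) :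
    (A * Matrix.diagonal x ^ 2 * Aᵀ).PosSemidef := by
  have h : A * Matrix.diagonal x ^ 2 * Aᵀ
      = (A * Matrix.diagonal x) * (A * Matrix.diagonal x)ᴴ := by
    rw [Matrix.conjTranspose_mul, Matrix.conjTranspose_eq_transpose_of_trivial,
      Matrix.conjTranspose_eq_transpose_of_trivial, Matrix.diagonal_transpose, pow_two,
      Matrix.mul_assoc, Matrix.mul_assoc, Matrix.mul_assoc]
  rw [h]
  exact Matrix.posSemidef_self_mul_conjTranspose _

lemma euclidNorm_eq_norm' {n : ℕ} (v : Fin n → ℝ) :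
    euclidNorm v = ‖(WithLp.equiv 2 (Fin n → ℝ)).symm v‖ := by
  rw [EuclideanSpace.norm_eq]
  simp [euclidNorm, Real.norm_eq_abs, sq_abs]

lemma euclidNorm_nonneg' {n : ℕ} (v : Fin n → ℝ) : 0 ≤ euclidNorm v := Real.sqrt_nonneg _

lemma euclidNorm_add_le' {n : ℕ} (u v : Fin n → ℝ) : euclidNorm (u + v) ≤ euclidNorm u + euclidNorm v := by
  rw [euclidNorm_eq_norm', euclidNorm_eq_norm', euclidNorm_eq_norm']
  rw [show (WithLp.equiv 2 (Fin n → ℝ)).symm (u + v)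
      = (WithLp.equiv 2 (Fin n → ℝ)).symm u + (WithLp.equiv 2 (Fin n → ℝ)).symm v from rfl]
  exact norm_add_le _ _

lemma euclidNorm_smul' {n : ℕ} (a : ℝ) (v : Fin n → ℝ) : euclidNorm (a • v) = |a| * euclidNorm v := by
  simp only [euclidNorm, Pi.smul_apply, smul_eq_mul, mul_pow, ← Finset.mul_sum]
  rw [Real.sqrt_mul (sq_nonneg a), Real.sqrt_sq_eq_abs]

lemma euclidNorm_neg' {n : ℕ} (v : Fin n → ℝ) : euclidNorm (-v) = euclidNorm v := by
  simp [euclidNorm]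

lemma abs_le_euclidNorm' {n : ℕ} (v : Fin n → ℝ) (i : Fin n) : |v i| ≤ euclidNorm v := by
  rw [← Real.sqrt_sq_eq_abs]
  exact Real.sqrt_le_sqrt (Finset.single_le_sum (fun j _ => sq_nonneg (v j)) (Finset.mem_univ i))

lemma euclidNorm_one' {n : ℕ} : euclidNorm (1 : Fin n → ℝ) = Real.sqrt n := by
  simp [euclidNorm]

set_option maxHeartbeats 1000000 in
/-- one step of the inexact primal IPM keeps the iterate strictly
feasible and within the `1/2`-proximity region after the barrier update. -/
theorem stmt_14 {m n : ℕ} (A : Matrix (Fin m) (Fin n) ℝ) (b : Fin m → ℝ) (c : Fin n → ℝ)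
    (hn : 100 ≤ n)
    -- Assumption A1: nonempty primal and dual interiors, full row rank
    (hrank : A.rank = m)
    (hFp0 : ∃ x0 : Fin n → ℝ, A *ᵥ x0 = b ∧ ∀ i, 0 < x0 i)
    (hFd0 : ∃ (y0 : Fin m → ℝ) (s0 : Fin n → ℝ), Aᵀ *ᵥ y0 + s0 = c ∧ ∀ i, 0 < s0 i)
    (τ : ℝ) (hτ : τ = 1 / (10 * Real.sqrt n))
    (x : Fin n → ℝ) (hxfeas : A *ᵥ x = b) (hxpos : ∀ i, 0 < x i)
    (μ : ℝ) (hμ : 0 < μ)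
    (hδ : proxMin A c x μ ≤ 1 / 2)
    -- the projected dual solution s(x, μ) attaining δ(x, μ)
    (ysol : Fin m → ℝ) (ssol : Fin n → ℝ)
    (hsolfeas : Aᵀ *ᵥ ysol + ssol = c) (hsolnn : ∀ i, 0 ≤ ssol i)
    (hsolmin : ∀ (y' : Fin m → ℝ) (s' : Fin n → ℝ), Aᵀ *ᵥ y' + s' = c → (∀ i, 0 ≤ s' i) →
      euclidNorm (μ⁻¹ • (Matrix.diagonal x *ᵥ ssol) - 1)
        ≤ euclidNorm (μ⁻¹ • (Matrix.diagonal x *ᵥ s') - 1))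
    (zvec : Fin n → ℝ) (hzvec : zvec = μ⁻¹ • (Matrix.diagonal x *ᵥ ssol))
    -- the inexact iterate with error vector ψ_x
    (ψx : Fin n → ℝ) (hψx : euclidNorm ψx ≤ 1 / (40 * Real.sqrt (3 * n)))
    (xplus : Fin n → ℝ)
    (hxplus : xplus = Matrix.diagonal x *ᵥ ((2 : ℝ) • (1 : Fin n → ℝ) - zvec + ψx))
    (hplusfeas : A *ᵥ xplus = b) :
    (∀ i, 0.1 * x i ≤ xplus i) ∧ (∀ i, 0 < xplus i) ∧
    proxMin A c xplus ((1 - τ) * μ) ≤ 1 / 2 := by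
  have hn' : (100:ℝ) ≤ (n:ℝ) := by exact_mod_cast hn
  have hsn : (10:ℝ) ≤ Real.sqrt n := by
    rw [show (10:ℝ) = Real.sqrt 100 by
      rw [show (100:ℝ) = 10^2 by norm_num, Real.sqrt_sq]; norm_num]
    exact Real.sqrt_le_sqrt hn'
  have hτpos : 0 < τ := by rw [hτ]; positivity
  have hτle : τ ≤ 1/100 := by
    rw [hτ]
    rw [div_le_div_iff₀ (by linarith) (by norm_num)]
    linarith
  -- z bound
  have hz : euclidNorm (zvec - 1) ≤ 1/2 := by
    have hlb : euclidNorm (μ⁻¹ • (Matrix.diagonal x *ᵥ ssol) - 1) ≤ proxMin A c x μ := by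
      unfold proxMin
      refine le_csInf ⟨_, ⟨ysol, ssol, hsolfeas, hsolnn, rfl⟩⟩ ?_
      rintro r ⟨y', s', h1, h2, rfl⟩
      exact hsolmin y' s' h1 h2
    rw [hzvec]
    exact hlb.trans hδ
  have hzi : ∀ i, |zvec i - 1| ≤ 1/2 := by
    intro i
    have := abs_le_euclidNorm' (zvec - 1) i
    simp only [Pi.sub_apply, Pi.one_apply] at this
    exact this.trans hz
  -- ψ bound
  have h3n : (17:ℝ) ≤ Real.sqrt (3*n) := by
    rw [show (17:ℝ) = Real.sqrt (17^2) by rw [Real.sqrt_sq]; norm_num]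
    apply Real.sqrt_le_sqrt; push_cast; nlinarith
  have hψsmall : euclidNorm ψx ≤ 1/680 := by
    refine hψx.trans ?_
    rw [div_le_div_iff₀ (by nlinarith) (by norm_num)]
    nlinarith
  have hψi : ∀ i, |ψx i| ≤ 1/680 := fun i => (abs_le_euclidNorm' ψx i).trans hψsmall
  -- componentwise formula for xplus
  have hxplus_i : ∀ i, xplus i = x i * (2 - zvec i + ψx i) := by
    intro i
    rw [hxplus]
    simp only [Matrix.mulVec_diagonal, Pi.add_apply, Pi.sub_apply, Pi.smul_apply,
      Pi.one_apply, smul_eq_mul]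
    ring
  have h1 : ∀ i, 0.1 * x i ≤ xplus i := by
    intro i
    rw [hxplus_i]
    have h1' := abs_le.mp (hzi i)
    have h2' := abs_le.mp (hψi i)
    nlinarith [hxpos i]
  have h2 : ∀ i, 0 < xplus i := by
    intro i
    have : (0:ℝ) < 0.1 * x i := by have := hxpos i; linarith
    linarith [h1 i]
  refine ⟨h1, h2, ?_⟩
  -- part 3
  have h1τ : (0:ℝ) < 1 - τ := by linarith
  set q : Fin n → ℝ := fun i => (1 - zvec i)^2 with hqdef
  set p : Fin n → ℝ := fun i => zvec i * ψx i with hpdef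
  have hzi' : ∀ i, zvec i = μ⁻¹ * (x i * ssol i) := by
    intro i; rw [hzvec]; simp [Matrix.mulVec_diagonal]
  have hw : ((1-τ)*μ)⁻¹ • (Matrix.diagonal xplus *ᵥ ssol) - 1
      = (1-τ)⁻¹ • (τ • (1:Fin n → ℝ) + (-q) + p) := by
    funext i
    simp only [Pi.sub_apply, Pi.smul_apply, Pi.one_apply, Pi.add_apply, Pi.neg_apply,
      Matrix.mulVec_diagonal, smul_eq_mul, hqdef, hpdef]
    rw [hxplus_i i]
    rw [hzi' i]
    have hμ0 : μ ≠ 0 := ne_of_gt hμ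
    have h1τ0 : (1:ℝ) - τ ≠ 0 := ne_of_gt h1τ
    field_simp
    ring
  -- sum of squares bounds
  have hS : ∑ i, (zvec i - 1)^2 ≤ 1/4 := by
    have h0 : (0:ℝ) ≤ ∑ i, (zvec i - 1)^2 := Finset.sum_nonneg fun i _ => sq_nonneg _
    have := Real.sq_sqrt h0
    have h2' : (Real.sqrt (∑ i, (zvec i - 1)^2))^2 ≤ (1/2)^2 := by
      apply pow_le_pow_left₀ (Real.sqrt_nonneg _)
      · have : euclidNorm (zvec - 1) = Real.sqrt (∑ i, (zvec i - 1)^2) := by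
          simp [euclidNorm]
        linarith [hz, this ▸ hz]
      
    rw [this] at h2'
    linarith
  have hq : euclidNorm q ≤ 1/4 := by
    have hqs : ∑ i, (q i)^2 ≤ 1/16 := by
      have hterm : ∀ i ∈ Finset.univ, (q i)^2 ≤ (1/4) * (zvec i - 1)^2 := by
        intro i _
        have h1' := abs_le.mp (hzi i)
        have hsq : (zvec i - 1)^2 ≤ 1/4 := by nlinarith [h1'.1, h1'.2]
        simp only [hqdef]
        nlinarith [hsq, sq_nonneg (zvec i - 1)]
      calc ∑ i, (q i)^2 ≤ ∑ i, (1/4) * (zvec i - 1)^2 := Finset.sum_le_sum hterm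
        _ = (1/4) * ∑ i, (zvec i - 1)^2 := by rw [Finset.mul_sum]
        _ ≤ 1/16 := by linarith
    calc euclidNorm q ≤ Real.sqrt (1/16) := Real.sqrt_le_sqrt hqs
      _ = 1/4 := by
        rw [show (1:ℝ)/16 = (1/4)^2 by norm_num, Real.sqrt_sq]; norm_num
  have hp : euclidNorm p ≤ 3/1360 := by
    have hψs : ∑ i, (ψx i)^2 ≤ (1/680)^2 := by
      have h0 : (0:ℝ) ≤ ∑ i, (ψx i)^2 := Finset.sum_nonneg fun i _ => sq_nonneg _
      have := Real.sq_sqrt h0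
      have h2' : (Real.sqrt (∑ i, (ψx i)^2))^2 ≤ (1/680)^2 := by
        apply pow_le_pow_left₀ (Real.sqrt_nonneg _) hψsmall
      rw [this] at h2'
      linarith
    have hps : ∑ i, (p i)^2 ≤ (3/1360)^2 := by
      have hterm : ∀ i ∈ Finset.univ, (p i)^2 ≤ (9/4) * (ψx i)^2 := by
        intro i _
        have h1' := abs_le.mp (hzi i)
        have hzsq : (zvec i)^2 ≤ 9/4 := by nlinarith [h1'.1, h1'.2]
        simp only [hpdef]
        nlinarith [mul_le_mul_of_nonneg_right hzsq (sq_nonneg (ψx i)), sq_nonneg (ψx i)]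
      calc ∑ i, (p i)^2 ≤ ∑ i, (9/4) * (ψx i)^2 := Finset.sum_le_sum hterm
        _ = (9/4) * ∑ i, (ψx i)^2 := by rw [Finset.mul_sum]
        _ ≤ (3/1360)^2 := by nlinarith
    calc euclidNorm p ≤ Real.sqrt ((3/1360)^2) := Real.sqrt_le_sqrt hps
      _ = 3/1360 := by rw [Real.sqrt_sq]; norm_num
  have hτ1 : euclidNorm (τ • (1:Fin n → ℝ)) = 1/10 := by
    have hsn0 : Real.sqrt n ≠ 0 := by positivity
    rw [euclidNorm_smul', euclidNorm_one', abs_of_pos hτpos, hτ]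
    field_simp
  -- total bound
  have hbound : euclidNorm (((1-τ)*μ)⁻¹ • (Matrix.diagonal xplus *ᵥ ssol) - 1) ≤ 1/2 := by
    rw [hw, euclidNorm_smul', abs_of_pos (inv_pos.mpr h1τ)]
    have htri : euclidNorm (τ • (1:Fin n → ℝ) + (-q) + p)
        ≤ 1/10 + 1/4 + 3/1360 := by
      calc euclidNorm (τ • (1:Fin n → ℝ) + (-q) + p)
          ≤ euclidNorm (τ • (1:Fin n → ℝ) + (-q)) + euclidNorm p := euclidNorm_add_le' _ _
        _ ≤ euclidNorm (τ • (1:Fin n → ℝ)) + euclidNorm (-q) + euclidNorm p := by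
            linarith [euclidNorm_add_le' (τ • (1:Fin n → ℝ)) (-q)]
        _ ≤ 1/10 + 1/4 + 3/1360 := by
            rw [hτ1, euclidNorm_neg']
            linarith
    have hinv : (1-τ)⁻¹ ≤ 100/99 := by
      rw [show (100:ℝ)/99 = (99/100)⁻¹ by norm_num]
      exact inv_anti₀ (by norm_num) (by linarith)
    calc (1-τ)⁻¹ * euclidNorm (τ • (1:Fin n → ℝ) + (-q) + p)
        ≤ (100/99) * (1/10 + 1/4 + 3/1360) := by
          apply mul_le_mul hinv htri (euclidNorm_nonneg' _) (by norm_num)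
      _ ≤ 1/2 := by norm_num
  -- proxMin ≤ this element
  have hmem : euclidNorm (((1-τ)*μ)⁻¹ • (Matrix.diagonal xplus *ᵥ ssol) - 1)
      ∈ {r : ℝ | ∃ (y : Fin m → ℝ) (s : Fin n → ℝ),
        Aᵀ *ᵥ y + s = c ∧ (∀ i, 0 ≤ s i) ∧
        r = euclidNorm (((1-τ)*μ)⁻¹ • (Matrix.diagonal xplus *ᵥ s) - 1)} :=
    ⟨ysol, ssol, hsolfeas, hsolnn, rfl⟩
  unfold proxMin
  have hbdd : BddBelow {r : ℝ | ∃ (y : Fin m → ℝ) (s : Fin n → ℝ),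
        Aᵀ *ᵥ y + s = c ∧ (∀ i, 0 ≤ s i) ∧
        r = euclidNorm (((1-τ)*μ)⁻¹ • (Matrix.diagonal xplus *ᵥ s) - 1)} := by
    refine ⟨0, ?_⟩
    rintro r ⟨y', s', _, _, rfl⟩
    exact euclidNorm_nonneg' _
  exact (csInf_le hbdd hmem).trans hbound
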